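/- Let a, b, c, w, z, f : ℝ² → ℝ be C¹ functions, let θ, φ : ℝ² → ℝ be C² functions with ℒθ = 0 on ℝ² (where ℒθ := aθ_xx + bθ_yy + 2cθ_xy + (a_x+c_y+w)θ_x + (b_y+c_x+z)θ_y − fθ), and let p : ℝ² → ℝ be a C¹ function satisfying the p-equations: (θφp)_y = a(φθ_x − θφ_x) + c(φθ_y − θφ_y) + wθφ and (θφp)_x = −[c(φθ_x − θφ_x) + b(φθ_y − θφ_y) + zθφ] on ℝ². Define α := aφθ, β := bφθ, γ := (c−p)φθ, δ := (c+p)φθ. Then for every C² function X : ℝ² → ℝ and every point of ℝ²: φ·ℒ(θX) = α X_xx + β X_yy + (γ+δ) X_xy + (α_x + δ_y) X_x + (β_y + γ_x) X_y; that is, the gauge transformation L ↦ φ̂ ℒ θ̂ brings ℒ to elementary transformable form. -/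

import Mathlib

/-- Partial derivative with respect to the first variable. -/
noncomputable def px (f : ℝ × ℝ → ℝ) : ℝ × ℝ → ℝ :=
  fun p => fderiv ℝ f p (1, 0)

/-- Partial derivative with respect to the second variable. -/
noncomputable def py (f : ℝ × ℝ → ℝ) : ℝ × ℝ → ℝ :=
  fun p => fderiv ℝ f p (0, 1)

/-- The general second-order operator
`ℒψ = aψ_xx + bψ_yy + 2cψ_xy + (a_x+c_y+w)ψ_x + (b_y+c_x+z)ψ_y − fψ`. -/
noncomputable def Lop (a b c w z f ψ : ℝ × ℝ → ℝ) : ℝ × ℝ → ℝ :=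
  fun p =>
    a p * px (px ψ) p + b p * py (py ψ) p + 2 * c p * px (py ψ) p
      + (px a p + py c p + w p) * px ψ p
      + (py b p + px c p + z p) * py ψ p - f p * ψ p


lemma px_mul {f g : ℝ × ℝ → ℝ} {p : ℝ × ℝ}
    (hf : DifferentiableAt ℝ f p) (hg : DifferentiableAt ℝ g p) :
    px (fun q => f q * g q) p = px f p * g p + f p * px g p := by
  simp only [px, fderiv_fun_mul hf hg, ContinuousLinearMap.add_apply,
    ContinuousLinearMap.smul_apply, smul_eq_mul]
  ring

lemma py_mul {f g : ℝ × ℝ → ℝ} {p : ℝ × ℝ}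
    (hf : DifferentiableAt ℝ f p) (hg : DifferentiableAt ℝ g p) :
    py (fun q => f q * g q) p = py f p * g p + f p * py g p := by
  simp only [py, fderiv_fun_mul hf hg, ContinuousLinearMap.add_apply,
    ContinuousLinearMap.smul_apply, smul_eq_mul]
  ring

lemma px_add {f g : ℝ × ℝ → ℝ} {p : ℝ × ℝ}
    (hf : DifferentiableAt ℝ f p) (hg : DifferentiableAt ℝ g p) :
    px (fun q => f q + g q) p = px f p + px g p := by
  simp [px, fderiv_fun_add hf hg]

lemma py_add {f g : ℝ × ℝ → ℝ} {p : ℝ × ℝ}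
    (hf : DifferentiableAt ℝ f p) (hg : DifferentiableAt ℝ g p) :
    py (fun q => f q + g q) p = py f p + py g p := by
  simp [py, fderiv_fun_add hf hg]

lemma px_sub {f g : ℝ × ℝ → ℝ} {p : ℝ × ℝ}
    (hf : DifferentiableAt ℝ f p) (hg : DifferentiableAt ℝ g p) :
    px (fun q => f q - g q) p = px f p - px g p := by
  simp [px, fderiv_fun_sub hf hg]

lemma contDiff_px {f : ℝ × ℝ → ℝ} {n : ℕ∞} (h : ContDiff ℝ (n + 1) f) :
    ContDiff ℝ n (px f) :=
  (h.fderiv_right le_rfl).clm_apply contDiff_const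

lemma contDiff_py {f : ℝ × ℝ → ℝ} {n : ℕ∞} (h : ContDiff ℝ (n + 1) f) :
    ContDiff ℝ n (py f) :=
  (h.fderiv_right le_rfl).clm_apply contDiff_const


/-- the gauge transformation `ℒ ↦ φ̂ℒθ̂` brings `ℒ` to elementary
transformable form with coefficients `(aφθ, bφθ, (c−p)φθ, (c+p)φθ)`. -/
theorem gauge_brings_elementary_transformable
    (a b c w z f θ φ pfun : ℝ × ℝ → ℝ)
    (ha : ContDiff ℝ 1 a) (hb : ContDiff ℝ 1 b) (hc : ContDiff ℝ 1 c)
    (hw : ContDiff ℝ 1 w) (hz : ContDiff ℝ 1 z) (hf : ContDiff ℝ 1 f)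
    (hθ : ContDiff ℝ 2 θ) (hφ : ContDiff ℝ 2 φ)
    (hLθ : ∀ p : ℝ × ℝ, Lop a b c w z f θ p = 0)
    (hpfun : ContDiff ℝ 1 pfun)
    (hpy : ∀ p : ℝ × ℝ,
      py (fun q => θ q * φ q * pfun q) p =
        a p * (φ p * px θ p - θ p * px φ p)
        + c p * (φ p * py θ p - θ p * py φ p) + w p * θ p * φ p)
    (hpx : ∀ p : ℝ × ℝ,
      px (fun q => θ q * φ q * pfun q) p =
        -(c p * (φ p * px θ p - θ p * px φ p)
          + b p * (φ p * py θ p - θ p * py φ p) + z p * θ p * φ p))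
    (α β γ δ : ℝ × ℝ → ℝ)
    (hα : ∀ p : ℝ × ℝ, α p = a p * φ p * θ p)
    (hβ : ∀ p : ℝ × ℝ, β p = b p * φ p * θ p)
    (hγ : ∀ p : ℝ × ℝ, γ p = (c p - pfun p) * φ p * θ p)
    (hδ : ∀ p : ℝ × ℝ, δ p = (c p + pfun p) * φ p * θ p) :
    ∀ X : ℝ × ℝ → ℝ, ContDiff ℝ 2 X → ∀ p : ℝ × ℝ,
      φ p * Lop a b c w z f (fun q => θ q * X q) p =
        α p * px (px X) p + β p * py (py X) p + (γ p + δ p) * px (py X) p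
          + (px α p + py δ p) * px X p + (py β p + px γ p) * py X p := by
  intro X hX p
  have hθ' : ContDiff ℝ ((1 : ℕ∞) + 1) θ := hθ.of_le (by norm_num)
  have hφ' : ContDiff ℝ ((1 : ℕ∞) + 1) φ := hφ.of_le (by norm_num)
  have hX' : ContDiff ℝ ((1 : ℕ∞) + 1) X := hX.of_le (by norm_num)
  have dθ : Differentiable ℝ θ := hθ.differentiable (by norm_num)
  have dφ : Differentiable ℝ φ := hφ.differentiable (by norm_num)
  have dX : Differentiable ℝ X := hX.differentiable (by norm_num)
  have da : Differentiable ℝ a := ha.differentiable (by norm_num)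
  have db : Differentiable ℝ b := hb.differentiable (by norm_num)
  have dc : Differentiable ℝ c := hc.differentiable (by norm_num)
  have dpf : Differentiable ℝ pfun := hpfun.differentiable (by norm_num)
  have dθx : Differentiable ℝ (px θ) := (contDiff_px hθ').differentiable (by norm_num)
  have dθy : Differentiable ℝ (py θ) := (contDiff_py hθ').differentiable (by norm_num)
  have dXx : Differentiable ℝ (px X) := (contDiff_px hX').differentiable (by norm_num)
  have dXy : Differentiable ℝ (py X) := (contDiff_py hX').differentiable (by norm_num)
  -- first derivatives of θ*X as functions
  have hux : px (fun q => θ q * X q) = fun q => px θ q * X q + θ q * px X q :=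
    funext fun q => px_mul (dθ q) (dX q)
  have huy : py (fun q => θ q * X q) = fun q => py θ q * X q + θ q * py X q :=
    funext fun q => py_mul (dθ q) (dX q)
  -- coefficient functions rewritten
  have hαfun : α = fun q => a q * φ q * θ q := funext hα
  have hβfun : β = fun q => b q * φ q * θ q := funext hβ
  have hγfun : γ = fun q => c q * φ q * θ q - θ q * φ q * pfun q := by
    funext q; rw [hγ]; ring
  have hδfun : δ = fun q => c q * φ q * θ q + θ q * φ q * pfun q := by
    funext q; rw [hδ]; ring
  have dcφ : Differentiable ℝ (fun q => c q * φ q) := dc.mul dφ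
  have daφ : Differentiable ℝ (fun q => a q * φ q) := da.mul dφ
  have dbφ : Differentiable ℝ (fun q => b q * φ q) := db.mul dφ
  have dcφθ : DifferentiableAt ℝ (fun q => c q * φ q * θ q) p := (dcφ p).mul (dθ p)
  have dθφp : DifferentiableAt ℝ (fun q => θ q * φ q * pfun q) p :=
    ((dθ p).mul (dφ p)).mul (dpf p)
  have hL := hLθ p
  simp only [Lop] at hL
  simp only [Lop, hux, huy]
  rw [hαfun, hβfun, hγfun, hδfun]
  rw [px_add (f := fun q => px θ q * X q) (g := fun q => θ q * px X q) ((dθx p).mul (dX p)) ((dθ p).mul (dXx p)),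
      px_mul (dθx p) (dX p), px_mul (dθ p) (dXx p),
      py_add (f := fun q => py θ q * X q) (g := fun q => θ q * py X q) ((dθy p).mul (dX p)) ((dθ p).mul (dXy p)),
      py_mul (dθy p) (dX p), py_mul (dθ p) (dXy p),
      px_add (f := fun q => py θ q * X q) (g := fun q => θ q * py X q) ((dθy p).mul (dX p)) ((dθ p).mul (dXy p)),
      px_mul (dθy p) (dX p), px_mul (dθ p) (dXy p),
      px_mul (daφ p) (dθ p), px_mul (da p) (dφ p),
      py_mul (dbφ p) (dθ p), py_mul (db p) (dφ p),
      px_sub dcφθ dθφp, px_mul (dcφ p) (dθ p), px_mul (dc p) (dφ p),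
      py_add dcφθ dθφp, py_mul (dcφ p) (dθ p), py_mul (dc p) (dφ p),
      hpx p, hpy p]
  linear_combination φ p * X p * hL
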